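/- For integers 0 ≤ t ≤ n and q ≥ 2, the q-ary Hamming ball volume satisfies V_q(n,t) = ∑_{i=0}^{t} (n choose i)(q−1)^i ≤ q^{n·H_q(t/n)}, where H_q(x) = x·log_q(q−1) − x·log_q(x) − (1−x)·log_q(1−x) is the q-ary entropy function, provided 0 < t/n ≤ 1 − 1/q. -/

import Mathlib

/-- The `q`-ary entropy function `H_q(x) = x·log_q(q−1) − x·log_q x − (1−x)·log_q(1−x)`. -/
noncomputable def qaryEntropy (q : ℕ) (x : ℝ) : ℝ :=
  x * Real.logb q (q - 1) - x * Real.logb q x - (1 - x) * Real.logb q (1 - x)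

/-- For integers `0 ≤ t ≤ n` and `q ≥ 2` with `0 < t/n ≤ 1 − 1/q`, the `q`-ary Hamming ball
volume satisfies `V_q(n,t) = ∑_{i=0}^{t} (n choose i)(q−1)^i ≤ q^{n·H_q(t/n)}`. -/
theorem stmt_5 (n t q : ℕ) (htn : t ≤ n) (hq : 2 ≤ q)
    (hpos : 0 < (t : ℝ) / n) (hle : (t : ℝ) / n ≤ 1 - 1 / q) :
    (∑ i ∈ Finset.range (t + 1), (n.choose i : ℝ) * ((q : ℝ) - 1) ^ i)
      ≤ (q : ℝ) ^ ((n : ℝ) * qaryEntropy q ((t : ℝ) / n)) := by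
  have hq1 : (1:ℝ) < q := by exact_mod_cast hq
  have hq0 : (0:ℝ) < q := by linarith
  have hqne : (q:ℝ) ≠ 1 := ne_of_gt hq1
  have hn : 0 < n := by
    rcases Nat.eq_zero_or_pos n with h | h
    · simp [h] at hpos
    · exact h
  have hnR : (0:ℝ) < n := by exact_mod_cast hn
  set p : ℝ := (t:ℝ) / n with hpdef
  have hp0 : 0 < p := hpos
  have hp1 : p < 1 := by
    have : (0:ℝ) < 1 / q := by positivity
    linarith [hle]
  have h1p : (0:ℝ) < 1 - p := by linarith
  have hqm1 : (0:ℝ) < (q:ℝ) - 1 := by linarith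
  have hkey : p ≤ ((q:ℝ) - 1) * (1 - p) := by
    have h := mul_le_mul_of_nonneg_right hle hq0.le
    have h2 : (1 - 1/(q:ℝ)) * q = q - 1 := by field_simp
    nlinarith
  have hnp : (n:ℝ) * p = t := by
    rw [hpdef]; field_simp [hnR.ne']
  have hnt : ((n - t : ℕ) : ℝ) = (n:ℝ) - t := by
    push_cast [Nat.cast_sub htn]; ring
  have hn1p : (n:ℝ) * (1 - p) = ((n - t : ℕ) : ℝ) := by
    rw [hnt, mul_sub, mul_one, hnp]
  -- right hand side equals (q-1)^t / (p^t * (1-p)^(n-t))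
  have hrhs : (q : ℝ) ^ ((n : ℝ) * qaryEntropy q p)
      = ((q:ℝ) - 1) ^ t / (p ^ t * (1 - p) ^ (n - t)) := by
    have hexp : (n : ℝ) * qaryEntropy q p
        = (t:ℝ) * Real.logb q ((q:ℝ)-1) - ((t:ℝ) * Real.logb q p
            + ((n - t : ℕ):ℝ) * Real.logb q (1 - p)) := by
      unfold qaryEntropy
      rw [show (n:ℝ) * (p * Real.logb q ((q:ℝ)-1) - p * Real.logb q p
          - (1-p) * Real.logb q (1-p)) = ((n:ℝ)*p) * Real.logb q ((q:ℝ)-1)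
          - (((n:ℝ)*p) * Real.logb q p + ((n:ℝ)*(1-p)) * Real.logb q (1-p)) by ring,
        hnp, hn1p]
    rw [hexp, Real.rpow_sub hq0, Real.rpow_add hq0]
    have e1 : (q:ℝ) ^ ((t:ℝ) * Real.logb q ((q:ℝ)-1)) = ((q:ℝ)-1) ^ t := by
      rw [mul_comm, Real.rpow_mul hq0.le, Real.rpow_logb hq0 hqne hqm1,
        Real.rpow_natCast]
    have e2 : (q:ℝ) ^ ((t:ℝ) * Real.logb q p) = p ^ t := by
      rw [mul_comm, Real.rpow_mul hq0.le, Real.rpow_logb hq0 hqne hp0,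
        Real.rpow_natCast]
    have e3 : (q:ℝ) ^ (((n - t : ℕ):ℝ) * Real.logb q (1 - p)) = (1-p) ^ (n - t) := by
      rw [mul_comm, Real.rpow_mul hq0.le, Real.rpow_logb hq0 hqne h1p,
        Real.rpow_natCast]
    rw [e1, e2, e3]
  rw [hrhs]
  have hden : (0:ℝ) < p ^ t * (1 - p) ^ (n - t) := by positivity
  rw [le_div_iff₀ hden]
  -- main inequality
  have hbin : ∑ i ∈ Finset.range (n + 1),
      ((n.choose i : ℝ) * p ^ i * (1 - p) ^ (n - i)) = 1 := by
    have h := add_pow p (1 - p) n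
    rw [show p + (1 - p) = 1 by ring, one_pow] at h
    calc ∑ i ∈ Finset.range (n + 1), ((n.choose i : ℝ) * p ^ i * (1 - p) ^ (n - i))
        = ∑ i ∈ Finset.range (n + 1), p ^ i * (1 - p) ^ (n - i) * (n.choose i : ℝ) :=
          Finset.sum_congr rfl (fun i _ => by ring)
      _ = 1 := h.symm
  calc (∑ i ∈ Finset.range (t + 1), (n.choose i : ℝ) * ((q : ℝ) - 1) ^ i)
        * (p ^ t * (1 - p) ^ (n - t))
      = ∑ i ∈ Finset.range (t + 1),
          (n.choose i : ℝ) * ((q : ℝ) - 1) ^ i * (p ^ t * (1 - p) ^ (n - t)) := by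
        rw [Finset.sum_mul]
    _ ≤ ∑ i ∈ Finset.range (t + 1),
          ((q:ℝ) - 1) ^ t * ((n.choose i : ℝ) * p ^ i * (1 - p) ^ (n - i)) := by
        apply Finset.sum_le_sum
        intro i hi
        have hit : i ≤ t := Nat.lt_succ_iff.mp (Finset.mem_range.mp hi)
        obtain ⟨k, hk⟩ : ∃ k, t = i + k := ⟨t - i, by omega⟩
        set m := n - t with hm
        have hni : n - i = m + k := by omega
        have hti : t = i + k := hk
        rw [hti, hni, pow_add, pow_add, pow_add]
        have hpk : p ^ k ≤ (((q:ℝ) - 1) * (1 - p)) ^ k :=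
          pow_le_pow_left₀ hp0.le hkey k
        have hmul := mul_le_mul_of_nonneg_left hpk
          (by positivity : (0:ℝ) ≤ (n.choose i : ℝ) * ((q:ℝ)-1) ^ i * p ^ i * (1-p) ^ m)
        calc (n.choose i : ℝ) * ((q : ℝ) - 1) ^ i * (p ^ i * p ^ k * (1 - p) ^ m)
            = (n.choose i : ℝ) * ((q:ℝ)-1) ^ i * p ^ i * (1-p) ^ m * p ^ k := by ring
          _ ≤ (n.choose i : ℝ) * ((q:ℝ)-1) ^ i * p ^ i * (1-p) ^ m
                * (((q:ℝ)-1) * (1-p)) ^ k := hmul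
          _ = ((q:ℝ)-1) ^ i * ((q:ℝ)-1) ^ k
                * ((n.choose i : ℝ) * p ^ i * ((1-p) ^ m * (1-p) ^ k)) := by
              rw [mul_pow]; ring
    _ ≤ ∑ i ∈ Finset.range (n + 1),
          ((q:ℝ) - 1) ^ t * ((n.choose i : ℝ) * p ^ i * (1 - p) ^ (n - i)) := by
        apply Finset.sum_le_sum_of_subset_of_nonneg
        · exact Finset.range_subset_range.mpr (by omega)
        · intro i _ _
          positivity
    _ = ((q:ℝ) - 1) ^ t := by
        rw [← Finset.mul_sum, hbin, mul_one]
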